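/- For θ ∈ [0, π/2], the double integral ∫₀^{2π} ∫₀^1 γ · 1_{γ sin²(θ − β) ≤ sin²(θ)} (1/(2π)) dγ dβ equals θ/π + (2 − cos(2θ)) sin(2θ)/(6π). -/

import Mathlib

open Real intervalIntegral

open MeasureTheory Set in
private lemma inner_int (s t : ℝ) (hs : 0 ≤ s) (ht : 0 ≤ t) :
    (∫ γ in (0:ℝ)..1, γ * (if γ * s ≤ t then (1:ℝ) else 0))
      = if s ≤ t then 1/2 else t^2/(2*s^2) := by
  have hmeas : ∀ a b : ℝ, IntervalIntegrable
      (fun γ : ℝ => γ * (if γ * s ≤ t then (1:ℝ) else 0)) volume a b := by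
    intro a b
    apply IntervalIntegrable.mono_fun (intervalIntegrable_id (a := a) (b := b) (μ := volume))
    · exact ((measurable_id.mul
        (Measurable.ite (measurableSet_le (measurable_id.mul_const s) measurable_const)
          measurable_const measurable_const)).aestronglyMeasurable)
    · refine Filter.Eventually.of_forall (fun x => ?_)
      by_cases h : x * s ≤ t <;> simp [h, abs_nonneg]
  by_cases h : s ≤ t
  · rw [if_pos h]
    have heq : EqOn (fun γ : ℝ => γ * (if γ * s ≤ t then (1:ℝ) else 0)) (fun γ => γ) (uIcc 0 1) := by
      intro γ hγ
      rw [uIcc_of_le (by norm_num)] at hγ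
      have h1 : γ * s ≤ t := le_trans (by nlinarith [hγ.1, hγ.2]) h
      simp [h1]
    rw [intervalIntegral.integral_congr heq, integral_id]
    norm_num
  · rw [if_neg h]
    push_neg at h
    have hs' : 0 < s := lt_of_le_of_lt ht h
    have ha0 : 0 ≤ t / s := div_nonneg ht hs'.le
    have ha1 : t / s ≤ 1 := by rw [div_le_one hs']; exact h.le
    rw [← intervalIntegral.integral_add_adjacent_intervals (b := t / s) (hmeas 0 _) (hmeas _ 1)]
    have e1 : (∫ γ in (0:ℝ)..(t/s), γ * (if γ * s ≤ t then (1:ℝ) else 0))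
        = ∫ γ in (0:ℝ)..(t/s), γ := by
      refine intervalIntegral.integral_congr (fun γ hγ => ?_)
      rw [uIcc_of_le ha0] at hγ
      have h1 : γ * s ≤ t := by
        calc γ * s ≤ (t/s) * s := mul_le_mul_of_nonneg_right hγ.2 hs'.le
        _ = t := div_mul_cancel₀ t hs'.ne'
      simp [h1]
    have e2 : (∫ γ in (t/s)..1, γ * (if γ * s ≤ t then (1:ℝ) else 0)) = 0 := by
      rw [intervalIntegral.integral_congr_ae (g := fun _ => (0:ℝ))
        (Filter.Eventually.of_forall (fun x hx => ?_))]
      · simp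
      · rw [uIoc_of_le ha1] at hx
        have : t < x * s := by
          have := hx.1
          calc t = (t/s) * s := (div_mul_cancel₀ t hs'.ne').symm
          _ < x * s := by exact mul_lt_mul_of_pos_right this hs'
        simp [not_le.mpr this]
    rw [e1, e2, integral_id]
    rw [div_pow]
    ring

open MeasureTheory Set in
private lemma sin_sq_le_sin_sq (θ x : ℝ) (hθ2 : θ ≤ π/2) (hx : |x| ≤ θ) :
    Real.sin x ^ 2 ≤ Real.sin θ ^ 2 := by
  have hθ0 : 0 ≤ θ := le_trans (abs_nonneg x) hx
  have hmono := Real.strictMonoOn_sin.monotoneOn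
  have hxm : x ∈ Icc (-(π/2)) (π/2) := by
    constructor <;> [linarith [neg_le_of_abs_le hx]; linarith [le_of_abs_le hx]]
  have hθm : θ ∈ Icc (-(π/2)) (π/2) := ⟨by linarith, hθ2⟩
  have hθm' : -θ ∈ Icc (-(π/2)) (π/2) := ⟨by linarith, by linarith⟩
  have h1 : Real.sin x ≤ Real.sin θ := hmono hxm hθm (le_of_abs_le hx)
  have h2 : -Real.sin θ ≤ Real.sin x := by
    have := hmono hθm' hxm (neg_le_of_abs_le hx)
    rwa [Real.sin_neg] at this
  exact sq_le_sq' h2 h1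

open MeasureTheory Set in
private lemma sin_le_sin_mid (θ u : ℝ) (hθ0 : 0 ≤ θ) (hθ2 : θ ≤ π/2) (hu : u ∈ Icc θ (π - θ)) :
    Real.sin θ ≤ Real.sin u := by
  have hmono := Real.strictMonoOn_sin.monotoneOn
  have hθm : θ ∈ Icc (-(π/2)) (π/2) := ⟨by linarith, hθ2⟩
  by_cases h : u ≤ π/2
  · exact hmono hθm ⟨by linarith [hu.1], h⟩ hu.1
  · rw [← Real.sin_pi_sub u]
    have hm : π - u ∈ Icc (-(π/2)) (π/2) := ⟨by linarith [hu.2], by linarith⟩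
    exact hmono hθm hm (by linarith [hu.2])

open MeasureTheory Set in
private lemma ftc_csc4 (θ a b : ℝ) (hne : ∀ x ∈ uIcc a b, Real.sin (x - θ) ≠ 0) :
    ∫ x in a..b, (Real.sin θ ^ 2) ^ 2 / (2 * (Real.sin (θ - x) ^ 2) ^ 2)
      = (Real.sin θ ^ 2) ^ 2 / 2 *
        ((-(Real.cos (b - θ) / Real.sin (b - θ)) - Real.cos (b - θ) ^ 3 / (3 * Real.sin (b - θ) ^ 3))
        - (-(Real.cos (a - θ) / Real.sin (a - θ)) - Real.cos (a - θ) ^ 3 / (3 * Real.sin (a - θ) ^ 3))) := by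
  have hflip : ∀ x : ℝ, Real.sin (θ - x) ^ 2 = Real.sin (x - θ) ^ 2 := by
    intro x; rw [← neg_sub, Real.sin_neg]; ring
  simp_rw [hflip]
  rw [← smul_eq_mul, smul_sub]
  apply intervalIntegral.integral_eq_sub_of_hasDerivAt
    (f := fun x => ((Real.sin θ ^ 2) ^ 2 / 2) •
      (-(Real.cos (x - θ) / Real.sin (x - θ)) - Real.cos (x - θ) ^ 3 / (3 * Real.sin (x - θ) ^ 3)))
  · intro x hx
    have hsx : Real.sin (x - θ) ≠ 0 := hne x hx
    have h1 : HasDerivAt (fun x : ℝ => x - θ) 1 x := (hasDerivAt_id x).sub_const θ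
    have hsin : HasDerivAt (fun x : ℝ => Real.sin (x - θ)) (Real.cos (x - θ)) x := by
      simpa [Function.comp_def] using (Real.hasDerivAt_sin (x - θ)).comp x h1
    have hcos : HasDerivAt (fun x : ℝ => Real.cos (x - θ)) (-Real.sin (x - θ)) x := by
      simpa [Function.comp_def] using (Real.hasDerivAt_cos (x - θ)).comp x h1
    have hd1 : HasDerivAt (fun x : ℝ => Real.cos (x - θ) / Real.sin (x - θ))
        ((-Real.sin (x - θ) * Real.sin (x - θ) - Real.cos (x - θ) * Real.cos (x - θ)) /
          Real.sin (x - θ) ^ 2) x := hcos.div hsin hsx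
    have hcos3 : HasDerivAt (fun x : ℝ => Real.cos (x - θ) ^ 3)
        (3 * Real.cos (x - θ) ^ 2 * (-Real.sin (x - θ))) x := by
      simpa using hcos.fun_pow 3
    have hsin3 : HasDerivAt (fun x : ℝ => 3 * Real.sin (x - θ) ^ 3)
        (3 * (3 * Real.sin (x - θ) ^ 2 * Real.cos (x - θ))) x := by
      simpa using (hsin.pow 3).const_mul 3
    have hden : 3 * Real.sin (x - θ) ^ 3 ≠ 0 := by
      simp [pow_ne_zero, hsx]
    have hd2 : HasDerivAt (fun x : ℝ => Real.cos (x - θ) ^ 3 / (3 * Real.sin (x - θ) ^ 3))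
        ((3 * Real.cos (x - θ) ^ 2 * (-Real.sin (x - θ)) * (3 * Real.sin (x - θ) ^ 3)
          - Real.cos (x - θ) ^ 3 * (3 * (3 * Real.sin (x - θ) ^ 2 * Real.cos (x - θ))))
          / (3 * Real.sin (x - θ) ^ 3) ^ 2) x := hcos3.div hsin3 hden
    have hD := (hd1.neg.sub hd2).const_smul ((Real.sin θ ^ 2) ^ 2 / 2)
    convert hD using 1
    · rfl
    have pyth := Real.sin_sq_add_cos_sq (x - θ)
    rw [smul_eq_mul]
    field_simp
    linear_combination (-1 * Real.sin θ ^ 4 *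
      (Real.sin (x - θ) ^ 2 + Real.cos (x - θ) ^ 2 + 1)) * pyth
  · apply ContinuousOn.intervalIntegrable
    apply ContinuousOn.div continuousOn_const (by fun_prop)
    intro x hx
    have := hne x hx
    positivity

open MeasureTheory Set in
/-- For `θ ∈ [0, π/2]`,
`∫₀^{2π} ∫₀^1 γ 1_{γ sin²(θ-β) ≤ sin²θ} (1/(2π)) dγ dβ = θ/π + (2 - cos 2θ) sin 2θ / (6π)`. -/
theorem double_integral_indicator_first (θ : ℝ) (hθ : θ ∈ Set.Icc 0 (π / 2)) :
    ∫ β in (0 : ℝ)..(2 * π), ∫ γ in (0 : ℝ)..1,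
      γ * (if γ * Real.sin (θ - β) ^ 2 ≤ Real.sin θ ^ 2 then (1 : ℝ) else 0) * (1 / (2 * π))
      = θ / π + (2 - Real.cos (2 * θ)) * Real.sin (2 * θ) / (6 * π) := by
  obtain ⟨hθ0, hθ2⟩ := hθ
  have hπ : 0 < π := Real.pi_pos
  set c : ℝ := 1 / (2*π) with hc
  set F : ℝ → ℝ := fun β => (if Real.sin (θ-β)^2 ≤ Real.sin θ^2 then (1:ℝ)/2
    else (Real.sin θ^2)^2/(2*(Real.sin (θ-β)^2)^2)) with hF
  have hinner : ∀ β : ℝ, (∫ γ in (0:ℝ)..1,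
      γ * (if γ * Real.sin (θ-β)^2 ≤ Real.sin θ^2 then (1:ℝ) else 0) * (1/(2*π))) = F β * c := by
    intro β
    rw [intervalIntegral.integral_mul_const, inner_int _ _ (sq_nonneg _) (sq_nonneg _)]
  rw [intervalIntegral.integral_congr (g := fun β => F β * c) (fun β _ => hinner β)]
  -- integrability
  have hFmeas : Measurable F := by
    apply Measurable.ite (measurableSet_le (by fun_prop) (by fun_prop)) measurable_const
    fun_prop
  have hFbound : ∀ β, ‖F β * c‖ ≤ ‖(1/2 : ℝ) * c‖ := by
    intro β
    rw [norm_mul, norm_mul]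
    apply mul_le_mul_of_nonneg_right _ (norm_nonneg c)
    rw [Real.norm_eq_abs, Real.norm_eq_abs]
    simp only [hF]
    by_cases h : Real.sin (θ-β)^2 ≤ Real.sin θ^2
    · simp [h]
    · push_neg at h
      have hs : (0:ℝ) < Real.sin (θ-β)^2 := lt_of_le_of_lt (sq_nonneg _) h
      rw [if_neg (not_le.mpr h), abs_of_nonneg (by positivity), abs_of_nonneg (by norm_num)]
      rw [div_le_iff₀ (by positivity)]
      nlinarith [sq_nonneg (Real.sin θ^2), sq_nonneg (Real.sin (θ-β)^2)]
  have FInt : ∀ a b : ℝ, IntervalIntegrable (fun β => F β * c) volume a b := by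
    intro a b
    apply IntervalIntegrable.mono_fun (intervalIntegrable_const (c := (1/2 : ℝ) * c))
    · exact (hFmeas.mul_const c).aestronglyMeasurable
    · exact Filter.Eventually.of_forall hFbound
  rw [← intervalIntegral.integral_add_adjacent_intervals (a := 0) (b := 2*θ) (c := 2*π)
      (FInt 0 (2*θ)) (FInt (2*θ) (2*π)),
    ← intervalIntegral.integral_add_adjacent_intervals (a := 2*θ) (b := π) (c := 2*π)
      (FInt (2*θ) π) (FInt π (2*π)),
    ← intervalIntegral.integral_add_adjacent_intervals (a := π) (b := π+2*θ) (c := 2*π)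
      (FInt π (π+2*θ)) (FInt (π+2*θ) (2*π))]
  -- Piece 1
  have P1 : (∫ β in (0:ℝ)..(2*θ), F β * c) = θ * c := by
    rw [intervalIntegral.integral_congr (g := fun _ => (1/2 : ℝ) * c) ?_, intervalIntegral.integral_const]
    · simp; ring
    · intro β hβ
      rw [uIcc_of_le (by linarith)] at hβ
      have hcond : Real.sin (θ-β)^2 ≤ Real.sin θ^2 :=
        sin_sq_le_sin_sq θ (θ-β) hθ2 (abs_le.mpr ⟨by linarith [hβ.2], by linarith [hβ.1]⟩)
      simp only [hF, if_pos hcond]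
  -- Piece 3
  have P3 : (∫ β in π..(π+2*θ), F β * c) = θ * c := by
    rw [intervalIntegral.integral_congr (g := fun _ => (1/2 : ℝ) * c) ?_, intervalIntegral.integral_const]
    · simp; ring
    · intro β hβ
      rw [uIcc_of_le (by linarith)] at hβ
      have hsq : Real.sin (θ-β)^2 = Real.sin (θ-β+π)^2 := by
        rw [Real.sin_add_pi]; ring
      have hcond : Real.sin (θ-β)^2 ≤ Real.sin θ^2 := by
        rw [hsq]
        exact sin_sq_le_sin_sq θ (θ-β+π) hθ2
          (abs_le.mpr ⟨by linarith [hβ.2], by linarith [hβ.1]⟩)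
      simp only [hF, if_pos hcond]
  rcases eq_or_lt_of_le hθ0 with h0 | hθpos
  · -- θ = 0
    subst h0
    have hae : ∀ᵐ β : ℝ, Real.sin β ≠ 0 := by
      have hcnt : Set.Countable {x : ℝ | Real.sin x = 0} := by
        have hsub : {x : ℝ | Real.sin x = 0} ⊆ Set.range (fun n : ℤ => (n:ℝ) * π) := by
          intro x hx
          rcases Real.sin_eq_zero_iff.mp hx with ⟨n, hn⟩
          exact ⟨n, hn⟩
        exact (Set.countable_range _).mono hsub
      exact hcnt.ae_notMem volume
    have hzero : ∀ a b : ℝ, (∫ β in a..b, F β * c) = 0 := by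
      intro a b
      have hcong : ∀ᵐ β : ℝ, β ∈ Set.uIoc a b → F β * c = (fun _ : ℝ => (0:ℝ)) β := by
        filter_upwards [hae] with β hβ _
        have hpos : (0:ℝ) < Real.sin β ^ 2 :=
          lt_of_le_of_ne (sq_nonneg _) (Ne.symm (pow_ne_zero 2 hβ))
        have h1 : ¬ (Real.sin ((0:ℝ) - β)^2 ≤ Real.sin (0:ℝ)^2) := by
          rw [zero_sub, Real.sin_neg, Real.sin_zero, neg_pow]
          push_neg
          simpa using hpos
        simp only [hF, if_neg h1]
        simp [Real.sin_zero]
      rw [intervalIntegral.integral_congr_ae hcong, intervalIntegral.integral_zero]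
    rw [P1, P3, hzero, hzero]
    norm_num
  · -- θ > 0
    have hsθ : 0 < Real.sin θ := Real.sin_pos_of_pos_of_lt_pi hθpos (by linarith)
    -- EqOn F g on middle pieces
    have hEq : ∀ β : ℝ, Real.sin θ ^ 2 ≤ Real.sin (θ-β)^2 →
        F β = (Real.sin θ^2)^2/(2*(Real.sin (θ-β)^2)^2) := by
      intro β hts
      by_cases h : Real.sin (θ-β)^2 ≤ Real.sin θ^2
      · have heq : Real.sin (θ-β)^2 = Real.sin θ^2 := le_antisymm h hts
        simp only [hF, if_pos h, heq]
        rw [eq_div_iff (by positivity)]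
        ring
      · simp only [hF, if_neg h]
    have P2 : (∫ β in (2*θ)..π, F β * c)
        = (Real.sin θ^3 * Real.cos θ + Real.sin θ * Real.cos θ^3 / 3) * c := by
      rw [intervalIntegral.integral_congr
        (g := fun β => (Real.sin θ^2)^2/(2*(Real.sin (θ-β)^2)^2) * c) ?_]
      · rw [intervalIntegral.integral_mul_const, ftc_csc4 θ (2*θ) π ?hne]
        case hne =>
          intro x hx
          rw [uIcc_of_le (by linarith)] at hx
          have : 0 < Real.sin (x - θ) :=
            Real.sin_pos_of_pos_of_lt_pi (by linarith [hx.1]) (by linarith [hx.2])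
          exact this.ne'
        rw [show 2*θ - θ = θ by ring, Real.cos_pi_sub, Real.sin_pi_sub]
        field_simp [hsθ.ne']
        ring
      · intro β hβ
        rw [uIcc_of_le (by linarith)] at hβ
        have hsq : Real.sin (θ-β)^2 = Real.sin (β-θ)^2 := by
          rw [← neg_sub, Real.sin_neg]; ring
        have hts : Real.sin θ ^ 2 ≤ Real.sin (θ-β)^2 := by
          rw [hsq]
          have := sin_le_sin_mid θ (β-θ) hθ0 hθ2 ⟨by linarith [hβ.1], by linarith [hβ.2]⟩
          nlinarith [hsθ.le]
        simp only [hEq β hts]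
    have P4 : (∫ β in (π+2*θ)..(2*π), F β * c)
        = (Real.sin θ^3 * Real.cos θ + Real.sin θ * Real.cos θ^3 / 3) * c := by
      rw [intervalIntegral.integral_congr
        (g := fun β => (Real.sin θ^2)^2/(2*(Real.sin (θ-β)^2)^2) * c) ?_]
      · rw [intervalIntegral.integral_mul_const, ftc_csc4 θ (π+2*θ) (2*π) ?hne]
        case hne =>
          intro x hx
          rw [uIcc_of_le (by linarith)] at hx
          have h1 : Real.sin (x - θ) = -Real.sin (x - θ - π) := by
            rw [show x - θ = (x - θ - π) + π by ring, Real.sin_add_pi]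
            ring_nf
          have h2 : 0 < Real.sin (x - θ - π) :=
            Real.sin_pos_of_pos_of_lt_pi (by linarith [hx.1]) (by linarith [hx.2])
          rw [h1]; exact neg_ne_zero.mpr h2.ne'
        rw [show π + 2*θ - θ = θ + π by ring, show 2*π - θ = (π - θ) + π by ring,
          Real.sin_add_pi, Real.cos_add_pi, Real.sin_add_pi, Real.cos_add_pi,
          Real.cos_pi_sub, Real.sin_pi_sub]
        field_simp [hsθ.ne']
        ring
      · intro β hβ
        rw [uIcc_of_le (by linarith)] at hβ
        have hsq : Real.sin (θ-β)^2 = Real.sin (β-θ-π)^2 := by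
          rw [show θ - β = -((β-θ-π) + π) by ring, Real.sin_neg, Real.sin_add_pi]
          ring
        have hts : Real.sin θ ^ 2 ≤ Real.sin (θ-β)^2 := by
          rw [hsq]
          have := sin_le_sin_mid θ (β-θ-π) hθ0 hθ2 ⟨by linarith [hβ.1], by linarith [hβ.2]⟩
          nlinarith [hsθ.le]
        simp only [hEq β hts]
    rw [P1, P2, P3, P4, Real.cos_two_mul, Real.sin_two_mul, hc]
    have pyth := Real.sin_sq_add_cos_sq θ
    field_simp
    linear_combination (36 * Real.sin θ * Real.cos θ) * pyth
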